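/- Let n be a positive integer, let π ∈ NC(n), and let θ be a parity-preserving partition in NC(2n) such that θ ≪ π^(odd) ∪ K(π)^(even). Let X, Y be blocks of θ such that Y = Parent_θ(X) and Y has the same parity as X, and let θ' be the partition of {1,…,2n} obtained from θ by joining together the blocks X and Y. Then θ' is also a parity-preserving partition in NC(2n) satisfying θ' ≪ π^(odd) ∪ K(π)^(even). -/

import Mathlib

open Finset

attribute [local instance] Classical.propDecidable

open scoped ComplexOrder

namespace BBP

/-- Partitions of `{1,…,m}` modeled as `Finpartition`s of `univ : Finset (Fin m)`. -/
abbrev FP (m : ℕ) := Finpartition (Finset.univ : Finset (Fin m))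

noncomputable instance (m : ℕ) : Fintype (FP m) :=
  Fintype.ofInjective (fun π : FP m => π.parts) fun a b h => by
    cases a; cases b; simpa using h

/-- `x` is the minimum of the set `C`. -/
def IsMinOf {m : ℕ} (x : Fin m) (C : Finset (Fin m)) : Prop :=
  x ∈ C ∧ ∀ y ∈ C, x ≤ y

/-- `x` is the maximum of the set `C`. -/
def IsMaxOf {m : ℕ} (x : Fin m) (C : Finset (Fin m)) : Prop :=
  x ∈ C ∧ ∀ y ∈ C, y ≤ x

/-- `a` and `b` lie in one block of `π`. -/
def SameBlock {m : ℕ} (π : FP m) (a b : Fin m) : Prop :=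
  ∃ B ∈ π.parts, a ∈ B ∧ b ∈ B

/-- `π` is non-crossing: if `i<j<k<l`, `i,k` in one block and `j,l` in one block,
then all of them are in one block. -/
def IsNC {m : ℕ} (π : FP m) : Prop :=
  ∀ i j k l : Fin m, i < j → j < k → k < l →
    SameBlock π i k → SameBlock π j l → SameBlock π i j

/-- `A` embraces `B` : `min A ≤ min B` and `max B ≤ max A`. -/
def Embraces {m : ℕ} (A B : Finset (Fin m)) : Prop :=
  ∃ a₁ a₂ b₁ b₂ : Fin m, IsMinOf a₁ A ∧ IsMaxOf a₂ A ∧ IsMinOf b₁ B ∧ IsMaxOf b₂ B ∧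
    a₁ ≤ b₁ ∧ b₂ ≤ a₂

/-- `B` strictly embraces `A` : `min B < min A` and `max A < max B`. -/
def StrictlyEmbraces {m : ℕ} (B A : Finset (Fin m)) : Prop :=
  ∃ b₁ b₂ a₁ a₂ : Fin m, IsMinOf b₁ B ∧ IsMaxOf b₂ B ∧ IsMinOf a₁ A ∧ IsMaxOf a₂ A ∧
    b₁ < a₁ ∧ a₂ < b₂

/-- `A` is an outer block of `π`. -/
def IsOuter {m : ℕ} (π : FP m) (A : Finset (Fin m)) : Prop :=
  A ∈ π.parts ∧ ¬ ∃ B ∈ π.parts, StrictlyEmbraces B A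

/-- The number `|π|_out` of outer blocks of `π`. -/
noncomputable def numOuter {m : ℕ} (π : FP m) : ℕ :=
  (π.parts.filter fun A => IsOuter π A).card

/-- Reversed refinement order: every block of `ρ` is a union of blocks of `π`. -/
def Refines {m : ℕ} (π ρ : FP m) : Prop :=
  ∀ B ∈ π.parts, ∃ C ∈ ρ.parts, B ⊆ C

/-- The partial order `π ≪ ρ`. -/
def Ll {m : ℕ} (π ρ : FP m) : Prop :=
  Refines π ρ ∧
    ∀ C ∈ ρ.parts, ∃ B ∈ π.parts, ∃ x y : Fin m,
      IsMinOf x C ∧ IsMaxOf y C ∧ x ∈ B ∧ y ∈ B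

/-- The partition `1ₙ` of `{1,…,n+1}` with a single block. -/
noncomputable def fullPart (n : ℕ) : FP (n+1) :=
  Finpartition.indiscrete (by simpa using (Finset.univ_nonempty (α := Fin (n+1))).ne_empty)

/-- `π` is an interval partition. -/
def IsIntervalPartition {m : ℕ} (π : FP m) : Prop :=
  ∀ B ∈ π.parts, ∀ x ∈ B, ∀ z ∈ B, ∀ y : Fin m, x ≤ y → y ≤ z → y ∈ B

/-- `σ` is the permutation associated to `π` : on each block `{b₁ < ⋯ < b_q}` it is the
cycle `b₁ ↦ b₂ ↦ ⋯ ↦ b_q ↦ b₁`. -/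
def IsAssocPerm {m : ℕ} (π : FP m) (σ : Equiv.Perm (Fin m)) : Prop :=
  ∀ B ∈ π.parts, ∀ b ∈ B, σ b ∈ B ∧
    ((b < σ b ∧ ∀ x ∈ B, b < x → σ b ≤ x) ∨ (IsMaxOf b B ∧ IsMinOf (σ b) B))

/-- `κ` is the Kreweras complement of `π`, characterized by `P_κ = P_π⁻¹ ∘ P_{1ₙ}`,
where `P_{1ₙ}` is the cycle `1 ↦ 2 ↦ ⋯ ↦ n ↦ 1` (i.e. `finRotate`). -/
def IsKrewerasPair {m : ℕ} (π κ : FP m) : Prop :=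
  ∃ σπ σκ : Equiv.Perm (Fin m), IsAssocPerm π σπ ∧ IsAssocPerm κ σκ ∧
    σκ = σπ⁻¹ * finRotate m

/-- the element `2a-1` of `{1,…,2n}`, in `Fin (2n)` (0-indexed). -/
def oddEmb {n : ℕ} (a : Fin n) : Fin (2*n) := ⟨2*a.val, by have := a.isLt; omega⟩

/-- the element `2a` of `{1,…,2n}`, in `Fin (2n)` (0-indexed). -/
def evenEmb {n : ℕ} (a : Fin n) : Fin (2*n) := ⟨2*a.val + 1, by have := a.isLt; omega⟩

/-- `θ = π^(odd) ∪ ρ^(even)` : the blocks of `θ` are the sets `{2a-1 : a ∈ A}` for `A`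
a block of `π` and the sets `{2b : b ∈ B}` for `B` a block of `ρ`. -/
def IsOddEvenJoin {n : ℕ} (π ρ : FP n) (θ : FP (2*n)) : Prop :=
  θ.parts = π.parts.image (fun B => B.image oddEmb) ∪
    ρ.parts.image (fun B => B.image evenEmb)

/-- a block consisting of odd elements of `{1,…,2n}` (even 0-indexed values). -/
def OddBlock {m : ℕ} (B : Finset (Fin m)) : Prop := ∀ x ∈ B, x.val % 2 = 0

/-- a block consisting of even elements of `{1,…,2n}` (odd 0-indexed values). -/
def EvenBlock {m : ℕ} (B : Finset (Fin m)) : Prop := ∀ x ∈ B, x.val % 2 = 1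

/-- every block of `θ` is contained in the odds or in the evens. -/
def ParityPreserving {m : ℕ} (θ : FP m) : Prop :=
  ∀ B ∈ θ.parts, OddBlock B ∨ EvenBlock B

def OppositeParity {m : ℕ} (A B : Finset (Fin m)) : Prop :=
  (OddBlock A ∧ EvenBlock B) ∨ (EvenBlock A ∧ OddBlock B)

def SameParity {m : ℕ} (A B : Finset (Fin m)) : Prop :=
  (OddBlock A ∧ OddBlock B) ∨ (EvenBlock A ∧ EvenBlock B)

/-- `P = Parent_θ(A)` : the unique block `P ≠ A` of `θ` embracing `A` such that every
block `A' ≠ A` of `θ` embracing `A` also embraces `P`. -/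
def IsParent {m : ℕ} (θ : FP m) (A P : Finset (Fin m)) : Prop :=
  P ∈ θ.parts ∧ P ≠ A ∧ Embraces P A ∧
    ∀ A' ∈ θ.parts, A' ≠ A → Embraces A' A → Embraces A' P

/-- `θ` has exactly two outer blocks. -/
def ExactlyTwoOuterBlocks {m : ℕ} (θ : FP m) : Prop :=
  ∃ M ∈ θ.parts, ∃ N ∈ θ.parts, M ≠ N ∧ IsOuter θ M ∧ IsOuter θ N ∧
    ∀ A ∈ θ.parts, IsOuter θ A → A = M ∨ A = N

/-- A series in `ℂ₀⟨⟨z₁,…,z_k⟩⟩`, given by its family of coefficients: `f n w` is the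
coefficient of `z_{w 0} z_{w 1} ⋯ z_{w n}` (a word of length `n+1 ≥ 1`). -/
abbrev NCSeries (k : ℕ) := (n : ℕ) → (Fin (n+1) → Fin k) → ℂ

/-- The coefficient `Cf_{w|B}(f)` of the restriction of the word `w` to the set `B`,
listing the elements of `B` in increasing order.  (Equals `1` for `B = ∅`.) -/
noncomputable def partCoeff {k m : ℕ} (f : NCSeries k) (w : Fin (m+1) → Fin k)
    (B : Finset (Fin (m+1))) : ℂ :=
  if h : B.Nonempty then
    f (B.card - 1) (fun j =>
      w ((B.orderIsoOfFin (Nat.succ_pred_eq_of_pos (Finset.card_pos.mpr h)).symm j).1))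
  else 1

/-- The generalized coefficient `Cf_{w;π}(f) = ∏_{B block of π} Cf_{w|B}(f)`. -/
noncomputable def genCoeff {k m : ℕ} (f : NCSeries k) (w : Fin (m+1) → Fin k)
    (π : FP (m+1)) : ℂ :=
  ∏ B ∈ π.parts, partCoeff f w B

/-- Linear functionals on `ℂ⟨X₁,…,X_k⟩`. -/
abbrev Dist (k : ℕ) := FreeAlgebra ℂ (Fin k) →ₗ[ℂ] ℂ

/-- `μ ∈ D_alg(k)` : `μ` is normalized by `μ(1) = 1`. -/
def IsDalg {k : ℕ} (μ : Dist k) : Prop := μ 1 = 1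

/-- The moment series `M_μ`, with `(momentSeries μ) n w = μ (X_{w 0} ⋯ X_{w n})`. -/
noncomputable def momentSeries {k : ℕ} (μ : Dist k) : NCSeries k :=
  fun _ w => μ ((List.ofFn fun j => FreeAlgebra.ι ℂ (w j)).prod)

/-- `f = R_μ` : the moments of `μ` are obtained from `f` by summation over all
non-crossing partitions. -/
def IsRTransform {k : ℕ} (μ : Dist k) (f : NCSeries k) : Prop :=
  ∀ (n : ℕ) (w : Fin (n+1) → Fin k),
    momentSeries μ n w = ∑ π : FP (n+1), if IsNC π then genCoeff f w π else 0

/-- `g = η_μ` : the moments of `μ` are obtained from `g` by summation over all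
interval partitions. -/
def IsEtaSeries {k : ℕ} (μ : Dist k) (g : NCSeries k) : Prop :=
  ∀ (n : ℕ) (w : Fin (n+1) → Fin k),
    momentSeries μ n w = ∑ π : FP (n+1), if IsIntervalPartition π then genCoeff g w π else 0

/-- `μ ∈ D_c(k)` : `μ` is the joint distribution of a `k`-tuple of selfadjoint elements
with respect to a state on a unital C*-algebra. -/
def IsDc {k : ℕ} (μ : Dist k) : Prop :=
  IsDalg μ ∧
  ∃ (A : Type) (_ : NormedRing A) (_ : StarRing A) (_ : CStarRing A)
    (_ : NormedAlgebra ℂ A) (_ : StarModule ℂ A) (_ : CompleteSpace A)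
    (φ : A →ₗ[ℂ] ℂ) (x : Fin k → A),
      φ 1 = 1 ∧ (∀ a : A, 0 ≤ φ (star a * a)) ∧ (∀ i, IsSelfAdjoint (x i)) ∧
      ∀ (n : ℕ) (w : Fin (n+1) → Fin k),
        momentSeries μ n w = φ ((List.ofFn fun j => x (w j)).prod)

/-- convergence in moments. -/
def ConvInMoments {k : ℕ} (μseq : ℕ → Dist k) (μ : Dist k) : Prop :=
  ∀ P : FreeAlgebra ℂ (Fin k),
    Filter.Tendsto (fun N => μseq N P) Filter.atTop (nhds (μ P))

/-- coefficientwise convergence of series. -/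
def ConvCoeffwise {k : ℕ} (fseq : ℕ → NCSeries k) (f : NCSeries k) : Prop :=
  ∀ (n : ℕ) (w : Fin (n+1) → Fin k),
    Filter.Tendsto (fun N => fseq N n w) Filter.atTop (nhds (f n w))

/-- `ν` is the `p`-fold free additive convolution `μ ⊞ ⋯ ⊞ μ`, i.e. `R_ν = p · R_μ`. -/
def IsNFoldFree {k : ℕ} (p : ℕ) (μ ν : Dist k) : Prop :=
  ∃ f : NCSeries k, IsRTransform μ f ∧ IsRTransform ν (fun n w => (p : ℂ) * f n w)

/-- `ν` is the `p`-fold Boolean convolution `μ ⊎ ⋯ ⊎ μ`, i.e. `η_ν = p · η_μ`. -/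
def IsNFoldBool {k : ℕ} (p : ℕ) (μ ν : Dist k) : Prop :=
  ∃ g : NCSeries k, IsEtaSeries μ g ∧ IsEtaSeries ν (fun n w => (p : ℂ) * g n w)

/-- `ν = 𝔹(μ)` : the Boolean Bercovici–Pata bijection, `R_{𝔹(μ)} = η_μ`. -/
def IsBP {k : ℕ} (μ ν : Dist k) : Prop :=
  ∃ f : NCSeries k, IsEtaSeries μ f ∧ IsRTransform ν f

/-- `μ ∈ D_c(k)` is infinitely divisible with respect to `⊞`. -/
def IsInfDiv {k : ℕ} (μ : Dist k) : Prop :=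
  IsDc μ ∧ ∀ N : ℕ, 0 < N → ∃ ν : Dist k, IsDc ν ∧ IsNFoldFree N ν μ

/-- `g = Reta(f)`, i.e. there is `μ ∈ D_alg(k)` with `f = R_μ` and `g = η_μ`. -/
def RetaRel {k : ℕ} (f g : NCSeries k) : Prop :=
  ∃ μ : Dist k, IsDalg μ ∧ IsRTransform μ f ∧ IsEtaSeries μ g


lemma exists_isMinOf {m : ℕ} {B : Finset (Fin m)} (h : B.Nonempty) : ∃ x, IsMinOf x B :=
  ⟨B.min' h, B.min'_mem h, fun y hy => B.min'_le y hy⟩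

lemma exists_isMaxOf {m : ℕ} {B : Finset (Fin m)} (h : B.Nonempty) : ∃ x, IsMaxOf x B :=
  ⟨B.max' h, B.max'_mem h, fun y hy => B.le_max' y hy⟩

lemma isMinOf_unique {m : ℕ} {B : Finset (Fin m)} {x y : Fin m}
    (hx : IsMinOf x B) (hy : IsMinOf y B) : x = y :=
  le_antisymm (hx.2 y hy.1) (hy.2 x hx.1)

lemma isMaxOf_unique {m : ℕ} {B : Finset (Fin m)} {x y : Fin m}
    (hx : IsMaxOf x B) (hy : IsMaxOf y B) : x = y :=
  le_antisymm (hy.2 x hx.1) (hx.2 y hy.1)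

lemma embraces_of {m : ℕ} {P Q : Finset (Fin m)} {p p' q q' : Fin m}
    (h1 : IsMinOf p P) (h2 : IsMaxOf p' P) (h3 : IsMinOf q Q) (h4 : IsMaxOf q' Q)
    (h5 : p ≤ q) (h6 : q' ≤ p') : Embraces P Q :=
  ⟨p, p', q, q', h1, h2, h3, h4, h5, h6⟩

lemma embraces_elim {m : ℕ} {P Q : Finset (Fin m)} {p p' q q' : Fin m}
    (h : Embraces P Q)
    (h1 : IsMinOf p P) (h2 : IsMaxOf p' P) (h3 : IsMinOf q Q) (h4 : IsMaxOf q' Q) :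
    p ≤ q ∧ q' ≤ p' := by
  obtain ⟨a₁, a₂, b₁, b₂, g1, g2, g3, g4, g5, g6⟩ := h
  rw [isMinOf_unique h1 g1, isMaxOf_unique h2 g2]
  rw [isMinOf_unique h3 g3, isMaxOf_unique h4 g4]
  exact ⟨g5, g6⟩

lemma sameBlock_block_eq {m : ℕ} {θ : FP m} {B : Finset (Fin m)} {a b : Fin m}
    (hB : B ∈ θ.parts) (ha : a ∈ B) (h : SameBlock θ a b) : b ∈ B := by
  obtain ⟨C, hC, haC, hbC⟩ := h
  rwa [θ.eq_of_mem_parts hB hC ha haC]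

lemma perm_mem {m : ℕ} {π : FP m} {σ : Equiv.Perm (Fin m)} (h : IsAssocPerm π σ)
    {B : Finset (Fin m)} {b : Fin m} (hB : B ∈ π.parts) (hb : b ∈ B) : σ b ∈ B :=
  (h B hB b hb).1

lemma perm_inv_mem {m : ℕ} {π : FP m} {σ : Equiv.Perm (Fin m)} (h : IsAssocPerm π σ)
    {B : Finset (Fin m)} {b : Fin m} (hB : B ∈ π.parts) (hb : b ∈ B) : σ⁻¹ b ∈ B := by
  obtain ⟨C, hC, hzC⟩ := π.exists_mem (Finset.mem_univ (σ⁻¹ b))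
  have h2 : σ (σ⁻¹ b) ∈ C := perm_mem h hC hzC
  rw [show σ (σ⁻¹ b) = b from Equiv.apply_symm_apply _ _] at h2
  rwa [π.eq_of_mem_parts hB hC hb h2]

lemma finRotate_eq {m : ℕ} (y : Fin m) (h : y.val + 1 < m) :
    finRotate m y = ⟨y.val + 1, h⟩ := by
  cases m with
  | zero => exact y.elim0
  | succ m' =>
    rw [finRotate_succ_apply]
    have hy : y ≠ Fin.last m' := by
      intro e
      rw [e] at h
      simp [Fin.last] at h
    ext
    rw [Fin.val_add_one]
    simp [hy]



section Krew

variable {m : ℕ} {π κ : FP m} {σπ σκ : Equiv.Perm (Fin m)}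

lemma sigmaKappa_apply (hrel : σκ = σπ⁻¹ * finRotate m) {y : Fin m} (h : y.val + 1 < m) :
    σκ y = σπ⁻¹ ⟨y.val + 1, h⟩ := by
  rw [hrel, Equiv.Perm.mul_apply, finRotate_eq y h]

/-- L1 : if `a ≤ y < a'` with `a, a'` in a π-block, then `σκ y < a'`. -/
lemma stepL1 (hπ : IsNC π) (hπa : IsAssocPerm π σπ)
    (hrel : σκ = σπ⁻¹ * finRotate m)
    {A : Finset (Fin m)} (hA : A ∈ π.parts) {a a' y : Fin m}
    (ha : a ∈ A) (ha' : a' ∈ A) (hay : a ≤ y) (hya : y < a') : σκ y < a' := by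
  have h1 : y.val + 1 < m := lt_of_le_of_lt (by omega : y.val + 1 ≤ a'.val) a'.isLt
  set w : Fin m := ⟨y.val + 1, h1⟩ with hw
  have hval : σκ y = σπ⁻¹ w := sigmaKappa_apply hrel h1
  obtain ⟨C, hC, hwC⟩ := π.exists_mem (Finset.mem_univ w)
  have hzC : σπ⁻¹ w ∈ C := perm_inv_mem hπa hC hwC
  have hz : σπ (σπ⁻¹ w) = w := Equiv.apply_symm_apply _ _
  rcases (hπa C hC _ hzC).2 with ⟨hlt, _⟩ | ⟨hmax, hminw⟩
  · rw [hz] at hlt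
    rw [hval]
    have : (σπ⁻¹ w).val < y.val + 1 := hlt
    have : (σπ⁻¹ w).val < a'.val := by omega
    exact this
  · rw [hz] at hminw
    by_contra hcon
    push_neg at hcon
    -- a' ≤ σκ y = σπ⁻¹ w
    rw [hval] at hcon
    have hCA : C ≠ A := by
      intro e
      subst e
      have := hminw.2 a ha
      have : y.val + 1 ≤ a.val := this
      omega
    have hwa' : w < a' := by
      rcases lt_or_eq_of_le (show w ≤ a' from by
        have : y.val + 1 ≤ a'.val := by omega
        exact this) with h | h
      · exact h
      · exact absurd (π.eq_of_mem_parts hC hA (h ▸ hwC) ha') hCA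
    have hza' : a' < σπ⁻¹ w := by
      rcases lt_or_eq_of_le hcon with h | h
      · exact h
      · exact absurd (π.eq_of_mem_parts hC hA (h ▸ hzC) ha') hCA
    have haw : a < w := by
      have : a.val < y.val + 1 := by omega
      exact this
    obtain ⟨G, hG, haG, hwG⟩ := hπ a w a' (σπ⁻¹ w) haw hwa' hza'
      ⟨A, hA, ha, ha'⟩ ⟨C, hC, hwC, hzC⟩
    have : G = A := π.eq_of_mem_parts hG hA haG ha
    subst this
    exact hCA (π.eq_of_mem_parts hC hG hwC hwG)

/-- Pattern 1 impossible: `a ≤ b < a' ≤ b'` with `a,a'` in a π-block and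
`b,b'` in a κ-block. -/
lemma pattern1 (hπ : IsNC π) (hπa : IsAssocPerm π σπ) (hκa : IsAssocPerm κ σκ)
    (hrel : σκ = σπ⁻¹ * finRotate m)
    {A B : Finset (Fin m)} (hA : A ∈ π.parts) (hB : B ∈ κ.parts)
    {a a' b b' : Fin m} (ha : a ∈ A) (ha' : a' ∈ A) (hb : b ∈ B) (hb' : b' ∈ B)
    (h1 : a ≤ b) (h2 : b < a') (h3 : a' ≤ b') : False := by
  suffices H : ∀ N : ℕ, ∀ c : Fin m, c ∈ B → a ≤ c → c < a' → a'.val - c.val ≤ N → False from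
    H (a'.val - b.val) b hb h1 h2 le_rfl
  intro N
  induction N with
  | zero =>
    intro c _ _ h5 h6
    have : c.val < a'.val := h5
    omega
  | succ N ih =>
    intro c hc h4 h5 h6
    have hc2 := hκa B hB c hc
    rcases hc2.2 with ⟨hlt, _⟩ | ⟨hmax, _⟩
    · have hstep : σκ c < a' := stepL1 hπ hπa hrel hA ha ha' h4 h5
      refine ih (σκ c) hc2.1 (h4.trans hlt.le) hstep ?_
      have g1 : c.val < (σκ c).val := hlt
      have g2 : (σκ c).val < a'.val := hstep
      omega
    · have := hmax.2 b' hb'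
      have g1 : b'.val ≤ c.val := this
      have g2 : a'.val ≤ b'.val := h3
      have g3 : c.val < a'.val := h5
      omega

/-- I2 : `min B` and `max B + 1` lie in one π-block. -/
lemma bridgeI2 (hπa : IsAssocPerm π σπ) (hκa : IsAssocPerm κ σκ)
    (hrel : σκ = σπ⁻¹ * finRotate m)
    {B : Finset (Fin m)} (hB : B ∈ κ.parts) {β M : Fin m}
    (hβ : IsMinOf β B) (hM : IsMaxOf M B) (hlt : M.val + 1 < m) :
    ∃ E ∈ π.parts, β ∈ E ∧ (⟨M.val + 1, hlt⟩ : Fin m) ∈ E := by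
  have hσM : σκ M = β := by
    have h2 := hκa B hB M hM.1
    rcases h2.2 with ⟨hl, _⟩ | ⟨_, hmin⟩
    · exact absurd (hM.2 _ h2.1) (not_le_of_gt hl)
    · exact isMinOf_unique hmin hβ
  have hσβ : σπ β = ⟨M.val + 1, hlt⟩ := by
    have : σπ (σκ M) = finRotate m M := by
      rw [hrel, Equiv.Perm.mul_apply]; exact Equiv.apply_symm_apply _ _
    rw [hσM, finRotate_eq M hlt] at this
    exact this
  obtain ⟨E, hE, hβE⟩ := π.exists_mem (Finset.mem_univ β)
  exact ⟨E, hE, hβE, hσβ ▸ perm_mem hπa hE hβE⟩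

/-- I1 : `min A - 1` and `max A` lie in one κ-block (when `min A ≥ 1`). -/
lemma bridgeI1 (hπa : IsAssocPerm π σπ) (hκa : IsAssocPerm κ σκ)
    (hrel : σκ = σπ⁻¹ * finRotate m)
    {A : Finset (Fin m)} (hA : A ∈ π.parts) {α M : Fin m}
    (hα : IsMinOf α A) (hM : IsMaxOf M A) (hpos : 0 < α.val) :
    ∃ Bd ∈ κ.parts, (⟨α.val - 1, by omega⟩ : Fin m) ∈ Bd ∧ M ∈ Bd := by
  set d : Fin m := ⟨α.val - 1, by omega⟩ with hd
  have h1 : d.val + 1 < m := by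
    have := α.isLt
    simp only [hd]
    omega
  have hde : (⟨d.val + 1, h1⟩ : Fin m) = α := by
    ext; simp [hd]; omega
  have hσd : σκ d = σπ⁻¹ α := by rw [sigmaKappa_apply hrel h1, hde]
  have hzA : σπ⁻¹ α ∈ A := perm_inv_mem hπa hA hα.1
  have hzmax : σπ⁻¹ α = M := by
    have h2 := hπa A hA _ hzA
    have hz : σπ (σπ⁻¹ α) = α := Equiv.apply_symm_apply _ _
    rcases h2.2 with ⟨hl, _⟩ | ⟨hmx, _⟩
    · rw [hz] at hl
      exact absurd (hα.2 _ hzA) (not_le_of_gt hl)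
    · exact isMaxOf_unique hmx hM
  obtain ⟨Bd, hBd, hdBd⟩ := κ.exists_mem (Finset.mem_univ d)
  refine ⟨Bd, hBd, hdBd, ?_⟩
  have := perm_mem hκa hBd hdBd
  rwa [hσd, hzmax] at this

/-- Pattern 2 impossible: `b < a ≤ b' < a'`. -/
lemma pattern2 (hπ : IsNC π) (hπa : IsAssocPerm π σπ) (hκa : IsAssocPerm κ σκ)
    (hrel : σκ = σπ⁻¹ * finRotate m)
    {A B : Finset (Fin m)} (hA : A ∈ π.parts) (hB : B ∈ κ.parts)
    {a a' b b' : Fin m} (ha : a ∈ A) (ha' : a' ∈ A) (hb : b ∈ B) (hb' : b' ∈ B)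
    (h1 : b < a) (h2 : a ≤ b') (h3 : b' < a') : False := by
  obtain ⟨M, hM⟩ := exists_isMaxOf (κ.nonempty_of_mem_parts hB)
  obtain ⟨β, hβ⟩ := exists_isMinOf (κ.nonempty_of_mem_parts hB)
  by_cases hc : a' ≤ M
  · exact pattern1 hπ hπa hκa hrel hA hB ha ha' hb' hM.1 h2 h3 hc
  · push_neg at hc
    have hlt : M.val + 1 < m := by
      have g1 : M.val < a'.val := hc
      have := a'.isLt
      omega
    obtain ⟨E, hE, hβE, hME⟩ := bridgeI2 hπa hκa hrel hB hβ hM hlt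
    by_cases hEA : E = A
    · subst hEA
      exact pattern1 hπ hπa hκa hrel hE hB hβE ha hb hb' (hβ.2 b hb) h1 h2
    · have hβa : β < a := lt_of_le_of_lt (hβ.2 b hb) h1
      have haM1 : a < (⟨M.val + 1, hlt⟩ : Fin m) := by
        have g1 : a.val ≤ b'.val := h2
        have g2 : b'.val ≤ M.val := hM.2 b' hb'
        show a.val < M.val + 1
        omega
      have hM1a' : (⟨M.val + 1, hlt⟩ : Fin m) < a' := by
        rcases lt_or_eq_of_le (show (⟨M.val + 1, hlt⟩ : Fin m) ≤ a' from by
          show M.val + 1 ≤ a'.val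
          have : M.val < a'.val := hc
          omega) with h | h
        · exact h
        · exact absurd (π.eq_of_mem_parts hE hA (h ▸ hME) ha') hEA
      obtain ⟨G, hG, hβG, haG⟩ := hπ β a _ a' hβa haM1 hM1a'
        ⟨E, hE, hβE, hME⟩ ⟨A, hA, ha, ha'⟩
      have : G = A := π.eq_of_mem_parts hG hA haG ha
      subst this
      exact hEA (π.eq_of_mem_parts hE hG hβE hβG)

/-- The Kreweras complement is non-crossing. -/
lemma kappaNC (hπ : IsNC π) (hπa : IsAssocPerm π σπ) (hκa : IsAssocPerm κ σκ)
    (hrel : σκ = σπ⁻¹ * finRotate m) : IsNC κ := by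
  intro p q r s h1 h2 h3 hpr hqs
  obtain ⟨A₀, hA₀, hp, hr⟩ := hpr
  obtain ⟨B₀, hB₀, hq, hs⟩ := hqs
  by_cases hAB : A₀ = B₀
  · exact ⟨A₀, hA₀, hp, hAB ▸ hq⟩
  · exfalso
    obtain ⟨MA, hMA⟩ := exists_isMaxOf (κ.nonempty_of_mem_parts hA₀)
    obtain ⟨MB, hMB⟩ := exists_isMaxOf (κ.nonempty_of_mem_parts hB₀)
    obtain ⟨α, hα⟩ := exists_isMinOf (κ.nonempty_of_mem_parts hA₀)
    obtain ⟨β, hβ⟩ := exists_isMinOf (κ.nonempty_of_mem_parts hB₀)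
    have hMne : MA ≠ MB := by
      intro e
      exact hAB (κ.eq_of_mem_parts hA₀ hB₀ hMA.1 (e ▸ hMB.1))
    rcases lt_or_gt_of_ne hMne with hlt | hlt
    · have hm : MA.val + 1 < m := by
        have g1 : MA.val < MB.val := hlt
        have := MB.isLt
        omega
      obtain ⟨F, hF, hαF, hMF⟩ := bridgeI2 hπa hκa hrel hA₀ hα hMA hm
      refine pattern1 hπ hπa hκa hrel hF hB₀ hαF hMF hq hMB.1 ?_ ?_ ?_
      · exact le_trans (hα.2 p hp) h1.le
      · show q.val < MA.val + 1
        have g1 : q.val < r.val := h2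
        have g2 : r.val ≤ MA.val := hMA.2 r hr
        omega
      · show MA.val + 1 ≤ MB.val
        have : MA.val < MB.val := hlt
        omega
    · have hm : MB.val + 1 < m := by
        have g1 : MB.val < MA.val := hlt
        have := MA.isLt
        omega
      obtain ⟨E, hE, hβE, hME⟩ := bridgeI2 hπa hκa hrel hB₀ hβ hMB hm
      refine pattern1 hπ hπa hκa hrel hE hA₀ hβE hME hr hMA.1 ?_ ?_ ?_
      · exact le_trans (hβ.2 q hq) h2.le
      · show r.val < MB.val + 1
        have g1 : r.val < s.val := h3
        have g2 : s.val ≤ MB.val := hMB.2 s hs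
        omega
      · show MB.val + 1 ≤ MA.val
        have : MB.val < MA.val := hlt
        omega

end Krew

section Layer2

variable {n : ℕ}

lemma oddEmb_val (a : Fin n) : (oddEmb a).val = 2 * a.val := rfl
lemma evenEmb_val (a : Fin n) : (evenEmb a).val = 2 * a.val + 1 := rfl

lemma isMinOf_oddEmb_pull {A : Finset (Fin n)} {x : Fin (2*n)}
    (h : IsMinOf x (A.image oddEmb)) : ∃ a, x = oddEmb a ∧ IsMinOf a A := by
  obtain ⟨a, ha, hax⟩ := Finset.mem_image.1 h.1
  refine ⟨a, hax.symm, ha, fun b hb => ?_⟩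
  have := h.2 (oddEmb b) (Finset.mem_image_of_mem _ hb)
  rw [← hax] at this
  have hv : 2 * a.val ≤ 2 * b.val := this
  show a.val ≤ b.val
  omega

lemma isMaxOf_oddEmb_pull {A : Finset (Fin n)} {x : Fin (2*n)}
    (h : IsMaxOf x (A.image oddEmb)) : ∃ a, x = oddEmb a ∧ IsMaxOf a A := by
  obtain ⟨a, ha, hax⟩ := Finset.mem_image.1 h.1
  refine ⟨a, hax.symm, ha, fun b hb => ?_⟩
  have := h.2 (oddEmb b) (Finset.mem_image_of_mem _ hb)
  rw [← hax] at this
  have hv : 2 * b.val ≤ 2 * a.val := this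
  show b.val ≤ a.val
  omega

lemma isMinOf_evenEmb_pull {A : Finset (Fin n)} {x : Fin (2*n)}
    (h : IsMinOf x (A.image evenEmb)) : ∃ a, x = evenEmb a ∧ IsMinOf a A := by
  obtain ⟨a, ha, hax⟩ := Finset.mem_image.1 h.1
  refine ⟨a, hax.symm, ha, fun b hb => ?_⟩
  have := h.2 (evenEmb b) (Finset.mem_image_of_mem _ hb)
  rw [← hax] at this
  have hv : 2 * a.val + 1 ≤ 2 * b.val + 1 := this
  show a.val ≤ b.val
  omega

lemma isMaxOf_evenEmb_pull {A : Finset (Fin n)} {x : Fin (2*n)}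
    (h : IsMaxOf x (A.image evenEmb)) : ∃ a, x = evenEmb a ∧ IsMaxOf a A := by
  obtain ⟨a, ha, hax⟩ := Finset.mem_image.1 h.1
  refine ⟨a, hax.symm, ha, fun b hb => ?_⟩
  have := h.2 (evenEmb b) (Finset.mem_image_of_mem _ hb)
  rw [← hax] at this
  have hv : 2 * b.val + 1 ≤ 2 * a.val + 1 := this
  show b.val ≤ a.val
  omega

lemma odd_image_parity {A : Finset (Fin n)} {x : Fin (2*n)}
    (h : x ∈ A.image oddEmb) : x.val % 2 = 0 := by
  obtain ⟨a, _, rfl⟩ := Finset.mem_image.1 h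
  show 2 * a.val % 2 = 0
  omega

lemma even_image_parity {A : Finset (Fin n)} {x : Fin (2*n)}
    (h : x ∈ A.image evenEmb) : x.val % 2 = 1 := by
  obtain ⟨a, _, rfl⟩ := Finset.mem_image.1 h
  show (2 * a.val + 1) % 2 = 1
  omega

/-- block-form of the blocks of the odd-even join. -/
lemma block_form {π κ : FP n} {φ : FP (2*n)} (hφ : IsOddEvenJoin π κ φ)
    {C : Finset (Fin (2*n))} (hC : C ∈ φ.parts) :
    (∃ A ∈ π.parts, C = A.image oddEmb) ∨ (∃ B ∈ κ.parts, C = B.image evenEmb) := by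
  rw [hφ] at hC
  rcases Finset.mem_union.1 hC with h | h
  · obtain ⟨A, hA, rfl⟩ := Finset.mem_image.1 h
    exact Or.inl ⟨A, hA, rfl⟩
  · obtain ⟨B, hB, rfl⟩ := Finset.mem_image.1 h
    exact Or.inr ⟨B, hB, rfl⟩

/-- main lemma: `X` and its same-parity parent lie in a single block of `φ`. -/
lemma key_same_phi_block (hn : 0 < n) {π κ : FP n} (hπ : IsNC π) (hκ : IsKrewerasPair π κ)
    {φ : FP (2*n)} (hφ : IsOddEvenJoin π κ φ) {θ : FP (2*n)} (hll : Ll θ φ)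
    {X Y : Finset (Fin (2*n))} (hX : X ∈ θ.parts) (hXY : IsParent θ X Y)
    (hsame : SameParity X Y) :
    ∃ C ∈ φ.parts, X ⊆ C ∧ Y ⊆ C := by
  obtain ⟨σπ, σκ, hπa, hκa, hrel⟩ := hκ
  have hκNC : IsNC κ := kappaNC hπ hπa hκa hrel
  have hY : Y ∈ θ.parts := hXY.1
  have hYX : Y ≠ X := hXY.2.1
  obtain ⟨C, hC, hXC⟩ := hll.1 X hX
  obtain ⟨C', hC', hYC'⟩ := hll.1 Y hY
  suffices hCC : C = C' by exact ⟨C, hC, hXC, hCC ▸ hYC'⟩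
  by_contra hne
  -- min/max of X and Y
  obtain ⟨x₁, hx₁⟩ := exists_isMinOf (θ.nonempty_of_mem_parts hX)
  obtain ⟨x₂, hx₂⟩ := exists_isMaxOf (θ.nonempty_of_mem_parts hX)
  obtain ⟨y₁, hy₁⟩ := exists_isMinOf (θ.nonempty_of_mem_parts hY)
  obtain ⟨y₂, hy₂⟩ := exists_isMaxOf (θ.nonempty_of_mem_parts hY)
  obtain ⟨hyx1, hxy2⟩ := embraces_elim hXY.2.2.1 hy₁ hy₂ hx₁ hx₂
  have hyx1' : y₁ < x₁ := by
    rcases lt_or_eq_of_le hyx1 with h | h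
    · exact h
    · exact absurd (θ.eq_of_mem_parts hY hX (h ▸ hy₁.1) hx₁.1) hYX
  have hxy2' : x₂ < y₂ := by
    rcases lt_or_eq_of_le hxy2 with h | h
    · exact h
    · exact absurd (θ.eq_of_mem_parts hX hY (h ▸ hx₂.1) hy₂.1) (hYX ∘ Eq.symm)
  have hx12 : x₁ ≤ x₂ := hx₁.2 x₂ hx₂.1
  -- the θ-block covering min C and max C
  obtain ⟨Z, hZ, u, v, huC, hvC, huZ, hvZ⟩ := hll.2 C hC
  have hZC : Z ⊆ C := by
    obtain ⟨C₀, hC₀, hs⟩ := hll.1 Z hZ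
    rwa [φ.eq_of_mem_parts hC₀ hC (hs huZ) huC.1] at hs
  by_cases hZX : Z = X
  · -- X spans C : use the Kreweras bridge
    have huX : u ∈ X := hZX ▸ huZ
    have hvX : v ∈ X := hZX ▸ hvZ
    have hux : u = x₁ := le_antisymm (huC.2 x₁ (hXC hx₁.1)) (hx₁.2 u huX)
    have hvx : v = x₂ := le_antisymm (hx₂.2 v hvX) (hvC.2 x₂ (hXC hx₂.1))
    rw [hux] at huC
    rw [hvx] at hvC
    rcases hsame with ⟨hXodd, hYodd⟩ | ⟨hXeven, hYeven⟩
    · -- odd case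
      obtain ⟨A, hA, rfl⟩ : ∃ A ∈ π.parts, C = A.image oddEmb := by
        rcases block_form hφ hC with h | ⟨B, hB, hCB⟩
        · exact h
        · exact absurd (hXodd x₁ hx₁.1) (by rw [even_image_parity (hCB ▸ hXC hx₁.1)]; omega)
      obtain ⟨B, hB, rfl⟩ : ∃ B ∈ π.parts, C' = B.image oddEmb := by
        rcases block_form hφ hC' with h | ⟨B, hB, hCB⟩
        · exact h
        · exact absurd (hYodd y₁ hy₁.1) (by rw [even_image_parity (hCB ▸ hYC' hy₁.1)]; omega)
      obtain ⟨α₀, hx1e, hα₀⟩ := isMinOf_oddEmb_pull huC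
      obtain ⟨μ₀, hx2e, hμ₀⟩ := isMaxOf_oddEmb_pull hvC
      have hpos : 0 < α₀.val := by
        have h1 : y₁.val < x₁.val := hyx1'
        have h2 : x₁.val = 2 * α₀.val := by rw [hx1e]; rfl
        omega
      obtain ⟨Bd, hBd, hd₀, hμBd⟩ := bridgeI1 hπa hκa hrel hA hα₀ hμ₀ hpos
      set d₀ : Fin n := ⟨α₀.val - 1, by omega⟩ with hd₀def
      set D : Finset (Fin (2*n)) := Bd.image evenEmb with hDdef
      have hD : D ∈ φ.parts := by
        rw [hφ]
        exact Finset.mem_union_right _ (Finset.mem_image_of_mem _ hBd)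
      have hdD : evenEmb d₀ ∈ D := Finset.mem_image_of_mem _ hd₀
      have heD : evenEmb μ₀ ∈ D := Finset.mem_image_of_mem _ hμBd
      obtain ⟨ZD, hZD, u', v', hu'D, hv'D, hu'Z, hv'Z⟩ := hll.2 D hD
      have hZDsub : ZD ⊆ D := by
        obtain ⟨C₀, hC₀, hs⟩ := hll.1 ZD hZD
        rwa [φ.eq_of_mem_parts hC₀ hD (hs hu'Z) hu'D.1] at hs
      obtain ⟨mzd, hmzd⟩ := exists_isMinOf (θ.nonempty_of_mem_parts hZD)
      obtain ⟨Mzd, hMzd⟩ := exists_isMaxOf (θ.nonempty_of_mem_parts hZD)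
      have hZDX : ZD ≠ X := by
        intro e
        have h1 := even_image_parity (hZDsub hu'Z)
        have h2 := hXodd u' (e ▸ hu'Z)
        omega
      have hmzdx : mzd ≤ x₁ := by
        have g1 : mzd.val ≤ u'.val := hmzd.2 u' hu'Z
        have g2 : u'.val ≤ (evenEmb d₀).val := hu'D.2 _ hdD
        have g3 : (evenEmb d₀).val = 2 * α₀.val - 1 := by
          rw [evenEmb_val]; simp [hd₀def]; omega
        show mzd.val ≤ x₁.val
        have h2 : x₁.val = 2 * α₀.val := by rw [hx1e]; rfl
        omega
      have hxMzd : x₂ ≤ Mzd := by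
        have g1 : v'.val ≤ Mzd.val := hMzd.2 v' hv'Z
        have g2 : (evenEmb μ₀).val ≤ v'.val := hv'D.2 _ heD
        show x₂.val ≤ Mzd.val
        have h2 : x₂.val = 2 * μ₀.val := by rw [hx2e]; rfl
        have h3 : (evenEmb μ₀).val = 2 * μ₀.val + 1 := rfl
        omega
      have hEmb : Embraces ZD X := embraces_of hmzd hMzd hx₁ hx₂ hmzdx hxMzd
      obtain ⟨g1, g2⟩ := embraces_elim (hXY.2.2.2 ZD hZD hZDX hEmb) hmzd hMzd hy₁ hy₂
      -- crossing (mzd, y₁, d, y₂) : pattern2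
      obtain ⟨t₀, hmz_e, ht₀⟩ : ∃ t₀, mzd = evenEmb t₀ ∧ t₀ ∈ Bd := by
        obtain ⟨t, ht, hte⟩ := Finset.mem_image.1 (hZDsub hmzd.1)
        exact ⟨t, hte.symm, ht⟩
      obtain ⟨q₁, hq₁B, hq₁e⟩ := Finset.mem_image.1 (hYC' hy₁.1)
      obtain ⟨q₂, hq₂B, hq₂e⟩ := Finset.mem_image.1 (hYC' hy₂.1)
      refine pattern2 hπ hπa hκa hrel hB hBd hq₁B hq₂B ht₀ hd₀ ?_ ?_ ?_
      · -- t₀ < q₁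
        have g3 : mzd.val ≤ y₁.val := g1
        have g4 : mzd.val = 2 * t₀.val + 1 := by rw [hmz_e]; rfl
        have g5 : y₁.val = 2 * q₁.val := by rw [← hq₁e]; rfl
        show t₀.val < q₁.val
        omega
      · -- q₁ ≤ d₀
        have g5 : y₁.val = 2 * q₁.val := by rw [← hq₁e]; rfl
        have g6 : y₁.val < x₁.val := hyx1'
        have h2 : x₁.val = 2 * α₀.val := by rw [hx1e]; rfl
        show q₁.val ≤ d₀.val
        simp only [hd₀def]
        omega
      · -- d₀ < q₂
        have g5 : y₂.val = 2 * q₂.val := by rw [← hq₂e]; rfl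
        have g6 : x₂.val < y₂.val := hxy2'
        have h2 : x₁.val = 2 * α₀.val := by rw [hx1e]; rfl
        have h3 : x₁.val ≤ x₂.val := hx12
        show d₀.val < q₂.val
        simp only [hd₀def]
        omega
    · -- even case
      obtain ⟨BC, hBC, rfl⟩ : ∃ B ∈ κ.parts, C = B.image evenEmb := by
        rcases block_form hφ hC with ⟨A, hA, hCA⟩ | h
        · exact absurd (hXeven x₁ hx₁.1) (by rw [odd_image_parity (hCA ▸ hXC hx₁.1)]; omega)
        · exact h
      obtain ⟨B', hB', rfl⟩ : ∃ B ∈ κ.parts, C' = B.image evenEmb := by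
        rcases block_form hφ hC' with ⟨A, hA, hCA⟩ | h
        · exact absurd (hYeven y₁ hy₁.1) (by rw [odd_image_parity (hCA ▸ hYC' hy₁.1)]; omega)
        · exact h
      obtain ⟨β₀, hx1e, hβ₀⟩ := isMinOf_evenEmb_pull huC
      obtain ⟨M₀, hx2e, hM₀⟩ := isMaxOf_evenEmb_pull hvC
      have hx1v : x₁.val = 2 * β₀.val + 1 := by rw [hx1e]; rfl
      have hx2v : x₂.val = 2 * M₀.val + 1 := by rw [hx2e]; rfl
      have hM₀lt : M₀.val + 1 < n := by
        have g1 : x₂.val < y₂.val := hxy2'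
        have g2 : y₂.val % 2 = 1 := hYeven y₂ hy₂.1
        have g3 : y₂.val < 2 * n := y₂.isLt
        omega
      obtain ⟨E, hE, hβE, hME⟩ := bridgeI2 hπa hκa hrel hBC hβ₀ hM₀ hM₀lt
      set D : Finset (Fin (2*n)) := E.image oddEmb with hDdef
      have hD : D ∈ φ.parts := by
        rw [hφ]
        exact Finset.mem_union_left _ (Finset.mem_image_of_mem _ hE)
      have hdD : oddEmb β₀ ∈ D := Finset.mem_image_of_mem _ hβE
      have heD : oddEmb ⟨M₀.val + 1, hM₀lt⟩ ∈ D := Finset.mem_image_of_mem _ hME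
      obtain ⟨ZD, hZD, u', v', hu'D, hv'D, hu'Z, hv'Z⟩ := hll.2 D hD
      have hZDsub : ZD ⊆ D := by
        obtain ⟨C₀, hC₀, hs⟩ := hll.1 ZD hZD
        rwa [φ.eq_of_mem_parts hC₀ hD (hs hu'Z) hu'D.1] at hs
      obtain ⟨mzd, hmzd⟩ := exists_isMinOf (θ.nonempty_of_mem_parts hZD)
      obtain ⟨Mzd, hMzd⟩ := exists_isMaxOf (θ.nonempty_of_mem_parts hZD)
      have hZDX : ZD ≠ X := by
        intro e
        have h1 := odd_image_parity (hZDsub hu'Z)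
        have h2 := hXeven u' (e ▸ hu'Z)
        omega
      have hmzdx : mzd ≤ x₁ := by
        have g1 : mzd.val ≤ u'.val := hmzd.2 u' hu'Z
        have g2 : u'.val ≤ (oddEmb β₀).val := hu'D.2 _ hdD
        have g3 : (oddEmb β₀).val = 2 * β₀.val := rfl
        show mzd.val ≤ x₁.val
        omega
      have hxMzd : x₂ ≤ Mzd := by
        have g1 : v'.val ≤ Mzd.val := hMzd.2 v' hv'Z
        have g2 : (oddEmb (⟨M₀.val + 1, hM₀lt⟩ : Fin n)).val ≤ v'.val := hv'D.2 _ heD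
        have g3 : (oddEmb (⟨M₀.val + 1, hM₀lt⟩ : Fin n)).val = 2 * M₀.val + 2 := rfl
        show x₂.val ≤ Mzd.val
        omega
      have hEmb : Embraces ZD X := embraces_of hmzd hMzd hx₁ hx₂ hmzdx hxMzd
      obtain ⟨g1, g2⟩ := embraces_elim (hXY.2.2.2 ZD hZD hZDX hEmb) hmzd hMzd hy₁ hy₂
      obtain ⟨t₀, hmz_e, ht₀⟩ : ∃ t₀, mzd = oddEmb t₀ ∧ t₀ ∈ E := by
        obtain ⟨t, ht, hte⟩ := Finset.mem_image.1 (hZDsub hmzd.1)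
        exact ⟨t, hte.symm, ht⟩
      obtain ⟨q₁, hq₁B, hq₁e⟩ := Finset.mem_image.1 (hYC' hy₁.1)
      obtain ⟨q₂, hq₂B, hq₂e⟩ := Finset.mem_image.1 (hYC' hy₂.1)
      refine pattern1 hπ hπa hκa hrel hE hB' ht₀ hβE hq₁B hq₂B ?_ ?_ ?_
      · -- t₀ ≤ q₁
        have g3 : mzd.val ≤ y₁.val := g1
        have g4 : mzd.val = 2 * t₀.val := by rw [hmz_e]; rfl
        have g5 : y₁.val = 2 * q₁.val + 1 := by rw [← hq₁e]; rfl
        show t₀.val ≤ q₁.val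
        omega
      · -- q₁ < β₀
        have g5 : y₁.val = 2 * q₁.val + 1 := by rw [← hq₁e]; rfl
        have g6 : y₁.val < x₁.val := hyx1'
        show q₁.val < β₀.val
        omega
      · -- β₀ ≤ q₂
        have g5 : y₂.val = 2 * q₂.val + 1 := by rw [← hq₂e]; rfl
        have g6 : x₂.val < y₂.val := hxy2'
        show β₀.val ≤ q₂.val
        omega
  · -- Z ≠ X : crossing argument inside one parity
    obtain ⟨mz, hmz⟩ := exists_isMinOf (θ.nonempty_of_mem_parts hZ)
    obtain ⟨Mz, hMz⟩ := exists_isMaxOf (θ.nonempty_of_mem_parts hZ)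
    have hmzx : mz ≤ x₁ := le_trans (hmz.2 u huZ) (huC.2 x₁ (hXC hx₁.1))
    have hxMz : x₂ ≤ Mz := le_trans (hvC.2 x₂ (hXC hx₂.1)) (hMz.2 v hvZ)
    have hEmb : Embraces Z X := embraces_of hmz hMz hx₁ hx₂ hmzx hxMz
    obtain ⟨g1, g2⟩ := embraces_elim (hXY.2.2.2 Z hZ hZX hEmb) hmz hMz hy₁ hy₂
    have hmzy : mz < y₁ := by
      rcases lt_or_eq_of_le g1 with h | h
      · exact h
      · exact absurd (φ.eq_of_mem_parts hC hC' (hZC (h ▸ hmz.1)) (hYC' hy₁.1)) hne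
    have hx1y2 : x₁ < y₂ := lt_of_le_of_lt hx12 hxy2'
    rcases hsame with ⟨hXodd, hYodd⟩ | ⟨hXeven, hYeven⟩
    · obtain ⟨A, hA, rfl⟩ : ∃ A ∈ π.parts, C = A.image oddEmb := by
        rcases block_form hφ hC with h | ⟨B, hB, hCB⟩
        · exact h
        · exact absurd (hXodd x₁ hx₁.1) (by rw [even_image_parity (hCB ▸ hXC hx₁.1)]; omega)
      obtain ⟨B, hB, rfl⟩ : ∃ B ∈ π.parts, C' = B.image oddEmb := by
        rcases block_form hφ hC' with h | ⟨B, hB, hCB⟩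
        · exact h
        · exact absurd (hYodd y₁ hy₁.1) (by rw [even_image_parity (hCB ▸ hYC' hy₁.1)]; omega)
      obtain ⟨p, hpA, hpe⟩ := Finset.mem_image.1 (hZC hmz.1)
      obtain ⟨r, hrA, hre⟩ := Finset.mem_image.1 (hXC hx₁.1)
      obtain ⟨q, hqB, hqe⟩ := Finset.mem_image.1 (hYC' hy₁.1)
      obtain ⟨s, hsB, hse⟩ := Finset.mem_image.1 (hYC' hy₂.1)
      have hpq : p < q := by
        have e1 : mz.val = 2 * p.val := by rw [← hpe]; rfl
        have e2 : y₁.val = 2 * q.val := by rw [← hqe]; rfl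
        have : mz.val < y₁.val := hmzy
        show p.val < q.val
        omega
      have hqr : q < r := by
        have e1 : x₁.val = 2 * r.val := by rw [← hre]; rfl
        have e2 : y₁.val = 2 * q.val := by rw [← hqe]; rfl
        have : y₁.val < x₁.val := hyx1'
        show q.val < r.val
        omega
      have hrs : r < s := by
        have e1 : x₁.val = 2 * r.val := by rw [← hre]; rfl
        have e2 : y₂.val = 2 * s.val := by rw [← hse]; rfl
        have : x₁.val < y₂.val := hx1y2
        show r.val < s.val
        omega
      obtain ⟨G, hG, hpG, hqG⟩ := hπ p q r s hpq hqr hrs ⟨A, hA, hpA, hrA⟩ ⟨B, hB, hqB, hsB⟩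
      have hGA : G = A := π.eq_of_mem_parts hG hA hpG hpA
      have hABeq : A = B := π.eq_of_mem_parts hA hB (hGA ▸ hqG) hqB
      exact hne (by rw [hABeq])
    · obtain ⟨A, hA, rfl⟩ : ∃ A ∈ κ.parts, C = A.image evenEmb := by
        rcases block_form hφ hC with ⟨A, hA, hCA⟩ | h
        · exact absurd (hXeven x₁ hx₁.1) (by rw [odd_image_parity (hCA ▸ hXC hx₁.1)]; omega)
        · exact h
      obtain ⟨B, hB, rfl⟩ : ∃ B ∈ κ.parts, C' = B.image evenEmb := by
        rcases block_form hφ hC' with ⟨A, hA, hCA⟩ | h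
        · exact absurd (hYeven y₁ hy₁.1) (by rw [odd_image_parity (hCA ▸ hYC' hy₁.1)]; omega)
        · exact h
      obtain ⟨p, hpA, hpe⟩ := Finset.mem_image.1 (hZC hmz.1)
      obtain ⟨r, hrA, hre⟩ := Finset.mem_image.1 (hXC hx₁.1)
      obtain ⟨q, hqB, hqe⟩ := Finset.mem_image.1 (hYC' hy₁.1)
      obtain ⟨s, hsB, hse⟩ := Finset.mem_image.1 (hYC' hy₂.1)
      have hpq : p < q := by
        have e1 : mz.val = 2 * p.val + 1 := by rw [← hpe]; rfl
        have e2 : y₁.val = 2 * q.val + 1 := by rw [← hqe]; rfl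
        have : mz.val < y₁.val := hmzy
        show p.val < q.val
        omega
      have hqr : q < r := by
        have e1 : x₁.val = 2 * r.val + 1 := by rw [← hre]; rfl
        have e2 : y₁.val = 2 * q.val + 1 := by rw [← hqe]; rfl
        have : y₁.val < x₁.val := hyx1'
        show q.val < r.val
        omega
      have hrs : r < s := by
        have e1 : x₁.val = 2 * r.val + 1 := by rw [← hre]; rfl
        have e2 : y₂.val = 2 * s.val + 1 := by rw [← hse]; rfl
        have : x₁.val < y₂.val := hx1y2
        show r.val < s.val
        omega
      obtain ⟨G, hG, hpG, hqG⟩ := hκNC p q r s hpq hqr hrs ⟨A, hA, hpA, hrA⟩ ⟨B, hB, hqB, hsB⟩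
      have hGA : G = A := κ.eq_of_mem_parts hG hA hpG hpA
      have hABeq : A = B := κ.eq_of_mem_parts hA hB (hGA ▸ hqG) hqB
      exact hne (by rw [hABeq])

end Layer2

/-- Lemma 6.9: let `π ∈ NC(n)`, let `φ = π^(odd) ∪ K(π)^(even)`, and
let `θ` be a parity-preserving partition in `NC(2n)` with `θ ≪ φ`.  If `X, Y` are
blocks of `θ` with `Y = Parent_θ(X)` of the same parity as `X`, then the partition
`θ'` obtained from `θ` by joining `X` and `Y` is also a parity-preserving partition
in `NC(2n)` with `θ' ≪ φ`. -/
theorem statement16 (n : ℕ) (hn : 0 < n) (π κ : FP n) (hπ : IsNC π)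
    (hκ : IsKrewerasPair π κ) (φ : FP (2*n)) (hφ : IsOddEvenJoin π κ φ)
    (θ : FP (2*n)) (hθNC : IsNC θ) (hθpar : ParityPreserving θ) (hll : Ll θ φ)
    (X Y : Finset (Fin (2*n))) (hX : X ∈ θ.parts) (hXY : IsParent θ X Y)
    (hsame : SameParity X Y)
    (θ' : FP (2*n)) (hθ' : θ'.parts = insert (X ∪ Y) ((θ.parts.erase X).erase Y)) :
    ParityPreserving θ' ∧ IsNC θ' ∧ Ll θ' φ := by
  have hY : Y ∈ θ.parts := hXY.1
  have hYX : Y ≠ X := hXY.2.1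
  -- membership facts for θ'
  have hW : X ∪ Y ∈ θ'.parts := by rw [hθ']; exact Finset.mem_insert_self _ _
  have hmem2 : ∀ G ∈ θ.parts, G ≠ X → G ≠ Y → G ∈ θ'.parts := by
    intro G hG h1 h2
    rw [hθ']
    exact Finset.mem_insert_of_mem (Finset.mem_erase.2 ⟨h2, Finset.mem_erase.2 ⟨h1, hG⟩⟩)
  have hmem3 : ∀ G ∈ θ'.parts, G = X ∪ Y ∨ (G ∈ θ.parts ∧ G ≠ X ∧ G ≠ Y) := by
    intro G hG
    rw [hθ'] at hG
    rcases Finset.mem_insert.1 hG with h | h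
    · exact Or.inl h
    · obtain ⟨h2, h3⟩ := Finset.mem_erase.1 h
      obtain ⟨h4, h5⟩ := Finset.mem_erase.1 h3
      exact Or.inr ⟨h5, h4, h2⟩
  have hWsb : ∀ a b : Fin (2*n), a ∈ X ∪ Y → b ∈ X ∪ Y → SameBlock θ' a b :=
    fun a b ha hb => ⟨X ∪ Y, hW, ha, hb⟩
  have hlift : ∀ a b : Fin (2*n), SameBlock θ a b → SameBlock θ' a b := by
    rintro a b ⟨G, hG, ha, hb⟩
    by_cases h1 : G = X
    · exact hWsb a b (Finset.mem_union_left _ (h1 ▸ ha)) (Finset.mem_union_left _ (h1 ▸ hb))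
    · by_cases h2 : G = Y
      · exact hWsb a b (Finset.mem_union_right _ (h2 ▸ ha)) (Finset.mem_union_right _ (h2 ▸ hb))
      · exact ⟨G, hmem2 G hG h1 h2, ha, hb⟩
  have hsb : ∀ a b : Fin (2*n), SameBlock θ' a b →
      SameBlock θ a b ∨ (a ∈ X ∪ Y ∧ b ∈ X ∪ Y) := by
    rintro a b ⟨G, hG, ha, hb⟩
    rcases hmem3 G hG with h | ⟨h1, h2, h3⟩
    · exact Or.inr ⟨h ▸ ha, h ▸ hb⟩
    · exact Or.inl ⟨G, h1, ha, hb⟩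
  -- min/max of X and Y, with strict embracing inequalities
  obtain ⟨x₁, hx₁⟩ := exists_isMinOf (θ.nonempty_of_mem_parts hX)
  obtain ⟨x₂, hx₂⟩ := exists_isMaxOf (θ.nonempty_of_mem_parts hX)
  obtain ⟨y₁, hy₁⟩ := exists_isMinOf (θ.nonempty_of_mem_parts hY)
  obtain ⟨y₂, hy₂⟩ := exists_isMaxOf (θ.nonempty_of_mem_parts hY)
  obtain ⟨hyx1, hxy2⟩ := embraces_elim hXY.2.2.1 hy₁ hy₂ hx₁ hx₂
  have hxy2' : x₂ < y₂ := by
    rcases lt_or_eq_of_le hxy2 with h | h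
    · exact h
    · exact absurd (θ.eq_of_mem_parts hX hY (h ▸ hx₂.1) hy₂.1) (hYX ∘ Eq.symm)
  refine ⟨?_, ?_, ?_⟩
  · -- parity preserving
    intro B' hB'
    rcases hmem3 B' hB' with h | ⟨h1, _, _⟩
    · subst h
      rcases hsame with ⟨hO1, hO2⟩ | ⟨hE1, hE2⟩
      · exact Or.inl fun x hx => by
          rcases Finset.mem_union.1 hx with h | h
          exacts [hO1 x h, hO2 x h]
      · exact Or.inr fun x hx => by
          rcases Finset.mem_union.1 hx with h | h
          exacts [hE1 x h, hE2 x h]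
    · exact hθpar B' h1
  · -- non-crossing
    intro i j k l h1 h2 h3 hik hjl
    rcases hsb i k hik with hik' | ⟨hiW, hkW⟩
    · rcases hsb j l hjl with hjl' | ⟨hjW, hlW⟩
      · exact hlift i j (hθNC i j k l h1 h2 h3 hik' hjl')
      · -- (i,k) in a θ-block, (j,l) in X ∪ Y
        obtain ⟨G, hG, hiG, hkG⟩ := hik'
        by_cases hGX : G = X
        · exact hWsb i j (Finset.mem_union_left _ (hGX ▸ hiG)) hjW
        · by_cases hGY : G = Y
          · exact hWsb i j (Finset.mem_union_right _ (hGY ▸ hiG)) hjW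
          · rcases Finset.mem_union.1 hjW with hjX | hjY
            · rcases Finset.mem_union.1 hlW with hlX | hlY
              · exact hlift i j (hθNC i j k l h1 h2 h3 ⟨G, hG, hiG, hkG⟩ ⟨X, hX, hjX, hlX⟩)
              · -- j ∈ X, l ∈ Y
                rcases lt_trichotomy k x₂ with hk | hk | hk
                · exact hlift i j (hθNC i j k x₂ h1 h2 hk ⟨G, hG, hiG, hkG⟩ ⟨X, hX, hjX, hx₂.1⟩)
                · exact absurd (θ.eq_of_mem_parts hG hX (hk ▸ hkG) hx₂.1) hGX
                · rcases lt_trichotomy i x₁ with hi | hi | hi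
                  · -- i < x₁ : contradiction
                    exfalso
                    obtain ⟨g₁, hg₁⟩ := exists_isMinOf (θ.nonempty_of_mem_parts hG)
                    obtain ⟨g₂, hg₂⟩ := exists_isMaxOf (θ.nonempty_of_mem_parts hG)
                    have hEmb : Embraces G X := embraces_of hg₁ hg₂ hx₁ hx₂
                      (le_trans (hg₁.2 i hiG) hi.le) (le_trans hk.le (hg₂.2 k hkG))
                    obtain ⟨e1, e2⟩ := embraces_elim (hXY.2.2.2 G hG hGX hEmb) hg₁ hg₂ hy₁ hy₂
                    have hstrict : y₂ < g₂ := by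
                      rcases lt_or_eq_of_le e2 with h | h
                      · exact h
                      · exact absurd (θ.eq_of_mem_parts hG hY (h ▸ hg₂.1) hy₂.1) hGY
                    obtain ⟨H, hH, hyH, hkH⟩ := hθNC y₁ k y₂ g₂
                      (lt_of_le_of_lt (le_trans hyx1 (hx₁.2 j hjX)) h2)
                      (lt_of_lt_of_le h3 (hy₂.2 l hlY)) hstrict
                      ⟨Y, hY, hy₁.1, hy₂.1⟩ ⟨G, hG, hkG, hg₂.1⟩
                    have hHY : H = Y := θ.eq_of_mem_parts hH hY hyH hy₁.1
                    exact hGY (θ.eq_of_mem_parts hG hY hkG (hHY ▸ hkH))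
                  · exact hWsb i j (Finset.mem_union_left _ (hi.symm ▸ hx₁.1)) hjW
                  · obtain ⟨H, hH, hx1H, hiH⟩ := hθNC x₁ i x₂ k hi
                      (lt_of_lt_of_le h1 (hx₂.2 j hjX)) hk
                      ⟨X, hX, hx₁.1, hx₂.1⟩ ⟨G, hG, hiG, hkG⟩
                    have hHX : H = X := θ.eq_of_mem_parts hH hX hx1H hx₁.1
                    exact hWsb i j (Finset.mem_union_left _ (hHX ▸ hiH)) hjW
            · rcases Finset.mem_union.1 hlW with hlX | hlY
              · -- j ∈ Y, l ∈ X
                exact hlift i j (hθNC i j k y₂ h1 h2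
                  (lt_of_lt_of_le h3 (le_trans (hx₂.2 l hlX) hxy2))
                  ⟨G, hG, hiG, hkG⟩ ⟨Y, hY, hjY, hy₂.1⟩)
              · exact hlift i j (hθNC i j k l h1 h2 h3 ⟨G, hG, hiG, hkG⟩ ⟨Y, hY, hjY, hlY⟩)
    · rcases hsb j l hjl with hjl' | ⟨hjW, hlW⟩
      · -- (i,k) in X ∪ Y, (j,l) in a θ-block
        obtain ⟨G, hG, hjG, hlG⟩ := hjl'
        by_cases hGX : G = X
        · exact hWsb i j hiW (Finset.mem_union_left _ (hGX ▸ hjG))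
        · by_cases hGY : G = Y
          · exact hWsb i j hiW (Finset.mem_union_right _ (hGY ▸ hjG))
          · rcases Finset.mem_union.1 hiW with hiX | hiY
            · rcases Finset.mem_union.1 hkW with hkX | hkY
              · exact hlift i j (hθNC i j k l h1 h2 h3 ⟨X, hX, hiX, hkX⟩ ⟨G, hG, hjG, hlG⟩)
              · -- i ∈ X, k ∈ Y
                obtain ⟨H, hH, hyH, hjH⟩ := hθNC y₁ j k l
                  (lt_of_le_of_lt (le_trans hyx1 (hx₁.2 i hiX)) h1) h2 h3
                  ⟨Y, hY, hy₁.1, hkY⟩ ⟨G, hG, hjG, hlG⟩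
                have hHY : H = Y := θ.eq_of_mem_parts hH hY hyH hy₁.1
                exact hWsb i j hiW (Finset.mem_union_right _ (hHY ▸ hjH))
            · rcases Finset.mem_union.1 hkW with hkX | hkY
              · -- i ∈ Y, k ∈ X
                rcases lt_trichotomy l x₂ with hl | hl | hl
                · obtain ⟨H, hH, hjH, hkH⟩ := hθNC j k l x₂ h2 h3 hl
                    ⟨G, hG, hjG, hlG⟩ ⟨X, hX, hkX, hx₂.1⟩
                  have hHX : H = X := θ.eq_of_mem_parts hH hX hkH hkX
                  exact hWsb i j hiW (Finset.mem_union_left _ (hHX ▸ hjH))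
                · exact absurd (θ.eq_of_mem_parts hG hX hlG (hl.symm ▸ hx₂.1)) hGX
                · rcases lt_trichotomy j x₁ with hj | hj | hj
                  · -- j < x₁
                    obtain ⟨g₁, hg₁⟩ := exists_isMinOf (θ.nonempty_of_mem_parts hG)
                    obtain ⟨g₂, hg₂⟩ := exists_isMaxOf (θ.nonempty_of_mem_parts hG)
                    have hEmb : Embraces G X := embraces_of hg₁ hg₂ hx₁ hx₂
                      (le_trans (hg₁.2 j hjG) hj.le) (le_trans hl.le (hg₂.2 l hlG))
                    obtain ⟨e1, e2⟩ := embraces_elim (hXY.2.2.2 G hG hGX hEmb) hg₁ hg₂ hy₁ hy₂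
                    have hstrict : y₂ < g₂ := by
                      rcases lt_or_eq_of_le e2 with h | h
                      · exact h
                      · exact absurd (θ.eq_of_mem_parts hG hY (h ▸ hg₂.1) hy₂.1) hGY
                    exact hlift i j (hθNC i j y₂ g₂ h1
                      (lt_of_lt_of_le h2 (le_trans (hx₂.2 k hkX) hxy2'.le)) hstrict
                      ⟨Y, hY, hiY, hy₂.1⟩ ⟨G, hG, hjG, hg₂.1⟩)
                  · exact hWsb i j hiW (Finset.mem_union_left _ (hj.symm ▸ hx₁.1))
                  · obtain ⟨H, hH, hx1H, hjH⟩ := hθNC x₁ j k l hj h2 h3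
                      ⟨X, hX, hx₁.1, hkX⟩ ⟨G, hG, hjG, hlG⟩
                    have hHX : H = X := θ.eq_of_mem_parts hH hX hx1H hx₁.1
                    exact hWsb i j hiW (Finset.mem_union_left _ (hHX ▸ hjH))
              · exact hlift i j (hθNC i j k l h1 h2 h3 ⟨Y, hY, hiY, hkY⟩ ⟨G, hG, hjG, hlG⟩)
      · exact hWsb i j hiW hjW
  · -- Ll θ' φ
    obtain ⟨Cxy, hCxy, hXCxy, hYCxy⟩ := key_same_phi_block hn hπ hκ hφ hll hX hXY hsame
    constructor
    · intro B' hB'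
      rcases hmem3 B' hB' with h | ⟨h1, _, _⟩
      · exact ⟨Cxy, hCxy, h ▸ Finset.union_subset hXCxy hYCxy⟩
      · exact hll.1 B' h1
    · intro C₀ hC₀
      obtain ⟨Bz, hBz, a, b, hmin, hmax, haB, hbB⟩ := hll.2 C₀ hC₀
      by_cases hBzX : Bz = X
      · exact ⟨X ∪ Y, hW, a, b, hmin, hmax,
          Finset.mem_union_left _ (hBzX ▸ haB), Finset.mem_union_left _ (hBzX ▸ hbB)⟩
      · by_cases hBzY : Bz = Y
        · exact ⟨X ∪ Y, hW, a, b, hmin, hmax,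
            Finset.mem_union_right _ (hBzY ▸ haB), Finset.mem_union_right _ (hBzY ▸ hbB)⟩
        · exact ⟨Bz, hmem2 Bz hBz hBzX hBzY, a, b, hmin, hmax, haB, hbB⟩
end BBP
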